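/- Let I and J be nonempty sets and 1 ≤ p < ∞. If there exists a doubly stochastic operator D : ℓᵖ(J) → ℓᵖ(I), then I and J have the same cardinality. -/

import Mathlib

open scoped ENNReal

/-- The standard basis element `e i` of `ℓᵖ(I)`. -/
noncomputable def stdb (p : ℝ≥0∞) {I : Type*} (i : I) : lp (fun _ : I => ℝ) p :=
  letI := Classical.decEq I
  lp.single p i 1

/-- A bounded linear operator `A : ℓᵖ(J) → ℓᵖ(I)` is positive if `A f ≥ 0` whenever `f ≥ 0`. -/
def IsPositiveOp {I J : Type*} {p : ℝ≥0∞} [Fact (1 ≤ p)]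
    (A : lp (fun _ : J => ℝ) p →L[ℝ] lp (fun _ : I => ℝ) p) : Prop :=
  ∀ f : lp (fun _ : J => ℝ) p, (∀ j, 0 ≤ f j) → ∀ i, 0 ≤ A f i

/-- Row stochastic: positive and each row sum `∑_j ⟨A e_j, e_i⟩` equals 1. -/
def IsRowStochastic {I J : Type*} {p : ℝ≥0∞} [Fact (1 ≤ p)]
    (A : lp (fun _ : J => ℝ) p →L[ℝ] lp (fun _ : I => ℝ) p) : Prop :=
  IsPositiveOp A ∧ ∀ i : I, HasSum (fun j : J => A (stdb p j) i) 1

/-- Column stochastic: positive and each column sum `∑_i ⟨A e_j, e_i⟩` equals 1. -/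
def IsColumnStochastic {I J : Type*} {p : ℝ≥0∞} [Fact (1 ≤ p)]
    (A : lp (fun _ : J => ℝ) p →L[ℝ] lp (fun _ : I => ℝ) p) : Prop :=
  IsPositiveOp A ∧ ∀ j : J, HasSum (fun i : I => A (stdb p j) i) 1

/-- Doubly stochastic: both row and column stochastic. -/
def IsDoublyStochastic {I J : Type*} {p : ℝ≥0∞} [Fact (1 ≤ p)]
    (A : lp (fun _ : J => ℝ) p →L[ℝ] lp (fun _ : I => ℝ) p) : Prop :=
  IsRowStochastic A ∧ IsColumnStochastic A

/-- `f ≺ g` : `f` is majorized by `g`, i.e. `f = D g` for some doubly stochastic `D`. -/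
def Majorized {I : Type*} {p : ℝ≥0∞} [Fact (1 ≤ p)]
    (f g : lp (fun _ : I => ℝ) p) : Prop :=
  ∃ D : lp (fun _ : I => ℝ) p →L[ℝ] lp (fun _ : I => ℝ) p,
    IsDoublyStochastic D ∧ f = D g

/-- `T` preserves majorization if `f ≺ g` implies `T f ≺ T g`. -/
def PreservesMajorization {I : Type*} {p : ℝ≥0∞} [Fact (1 ≤ p)]
    (T : lp (fun _ : I => ℝ) p →L[ℝ] lp (fun _ : I => ℝ) p) : Prop :=
  ∀ f g : lp (fun _ : I => ℝ) p, Majorized f g → Majorized (T f) (T g)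

lemma aux_embed {I J : Type*} (a : I → J → ℝ)
    (hrow : ∀ i, ∃ j, a i j ≠ 0)
    (hcol : ∀ j, (Function.support fun i => a i j).Countable) :
    Nonempty (I ↪ J × ℕ) := by
  choose j0 hj0 using hrow
  have hinj : ∀ j : J, ∃ f : (Function.support fun i => a i j) → ℕ, Function.Injective f := by
    intro j
    haveI := (hcol j).to_subtype
    exact exists_injective_nat _
  choose f hf using hinj
  classical
  refine ⟨⟨fun i => (j0 i, if h : a i (j0 i) ≠ 0 then f (j0 i) ⟨i, h⟩ + 1 else 0), ?_⟩⟩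
  intro i i' h
  simp only [Prod.mk.injEq] at h
  obtain ⟨h1, h2⟩ := h
  have hi : a i (j0 i') ≠ 0 := h1 ▸ hj0 i
  have hi' : a i' (j0 i') ≠ 0 := hj0 i'
  rw [h1] at h2
  rw [dif_pos hi, dif_pos hi', Nat.add_right_cancel_iff] at h2
  have := hf (j0 i') h2
  simpa using congrArg Subtype.val this

lemma aux_tsum {I J : Type*} (a : I → J → ℝ)
    (hnn : ∀ i j, 0 ≤ a i j)
    (hrow : ∀ i, HasSum (a i) 1)
    (hcol : ∀ j, HasSum (fun i => a i j) 1) :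
    ∑' _ : I, (1 : ℝ≥0∞) = ∑' _ : J, (1 : ℝ≥0∞) := by
  have key : ∀ (i : I), ∑' j, ENNReal.ofReal (a i j) = 1 := by
    intro i
    rw [← ENNReal.ofReal_tsum_of_nonneg (hnn i) (hrow i).summable, (hrow i).tsum_eq,
      ENNReal.ofReal_one]
  have key2 : ∀ (j : J), ∑' i, ENNReal.ofReal (a i j) = 1 := by
    intro j
    rw [← ENNReal.ofReal_tsum_of_nonneg (fun i => hnn i j) (hcol j).summable,
      (hcol j).tsum_eq, ENNReal.ofReal_one]
  calc ∑' _ : I, (1 : ℝ≥0∞) = ∑' i, ∑' j, ENNReal.ofReal (a i j) := by simp [key]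
    _ = ∑' j, ∑' i, ENNReal.ofReal (a i j) := ENNReal.tsum_comm
    _ = ∑' _ : J, (1 : ℝ≥0∞) := by simp [key2]

lemma aux_equiv {I : Type u} {J : Type v} [Infinite I] [Infinite J]
    (e1 : I ↪ J × ℕ) (e2 : J ↪ I × ℕ) : Nonempty (I ≃ J) := by
  have hJN : (Cardinal.mk (J × ℕ)) = Cardinal.mk J := by
    rw [Cardinal.mk_prod]
    simp only [Cardinal.lift_id', Cardinal.mk_nat, Cardinal.lift_aleph0, Cardinal.lift_id]
    exact Cardinal.mul_aleph0_eq (Cardinal.aleph0_le_mk J)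
  have hIN : (Cardinal.mk (I × ℕ)) = Cardinal.mk I := by
    rw [Cardinal.mk_prod]
    simp only [Cardinal.lift_id', Cardinal.mk_nat, Cardinal.lift_aleph0, Cardinal.lift_id]
    exact Cardinal.mul_aleph0_eq (Cardinal.aleph0_le_mk I)
  have h1 : Cardinal.lift.{v} (Cardinal.mk I) ≤ Cardinal.lift.{u} (Cardinal.mk J) := by
    have := Cardinal.lift_mk_le'.2 ⟨e1⟩
    rwa [hJN] at this
  have h2 : Cardinal.lift.{u} (Cardinal.mk J) ≤ Cardinal.lift.{v} (Cardinal.mk I) := by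
    have := Cardinal.lift_mk_le'.2 ⟨e2⟩
    rwa [hIN] at this
  exact Cardinal.lift_mk_eq'.1 (le_antisymm h1 h2)


/-- If there exists a doubly stochastic operator `D : ℓᵖ(J) → ℓᵖ(I)`, `1 ≤ p < ∞`,
then `I` and `J` have the same cardinality. -/
theorem stmt0 {I J : Type*} [Nonempty I] [Nonempty J] (p : ℝ≥0∞) [Fact (1 ≤ p)] (hp : p ≠ ∞)
    (D : lp (fun _ : J => ℝ) p →L[ℝ] lp (fun _ : I => ℝ) p)
    (hD : IsDoublyStochastic D) : Nonempty (J ≃ I) := by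
  classical
  set a : I → J → ℝ := fun i j => D (stdb p j) i with ha
  have hnn : ∀ i j, 0 ≤ a i j := by
    intro i j
    refine hD.1.1 (stdb p j) ?_ i
    intro j'
    by_cases h : j' = j
    · subst h; simp [stdb, lp.single_apply_self]
    · simp [stdb, lp.single_apply_ne p j _ h, Pi.single_apply, h]
  have hrow : ∀ i, HasSum (a i) 1 := fun i => hD.1.2 i
  have hcol : ∀ j, HasSum (fun i => a i j) 1 := fun j => hD.2.2 j
  have htsum := aux_tsum a hnn hrow hcol
  rcases finite_or_infinite I with hI | hI
  · haveI := Fintype.ofFinite I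
    rcases finite_or_infinite J with hJ | hJ
    · haveI := Fintype.ofFinite J
      have hc : (Fintype.card I : ℝ≥0∞) = Fintype.card J := by
        simpa [tsum_fintype] using htsum
      exact ⟨Fintype.equivOfCardEq (by exact_mod_cast hc.symm)⟩
    · exfalso
      have hJtop : ∑' _ : J, (1 : ℝ≥0∞) = ⊤ :=
        ENNReal.tsum_const_eq_top_of_ne_zero one_ne_zero
      have hIfin : ∑' _ : I, (1 : ℝ≥0∞) = Fintype.card I := by
        simp [tsum_fintype]
      rw [hIfin, hJtop] at htsum
      exact ENNReal.natCast_ne_top _ htsum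
  · rcases finite_or_infinite J with hJ | hJ
    · exfalso
      haveI := Fintype.ofFinite J
      have hItop : ∑' _ : I, (1 : ℝ≥0∞) = ⊤ :=
        ENNReal.tsum_const_eq_top_of_ne_zero one_ne_zero
      have hJfin : ∑' _ : J, (1 : ℝ≥0∞) = Fintype.card J := by
        simp [tsum_fintype]
      rw [hItop, hJfin] at htsum
      exact ENNReal.natCast_ne_top _ htsum.symm
    · -- both infinite
      have hex : ∀ i, ∃ j, a i j ≠ 0 := by
        intro i
        by_contra hc
        push_neg at hc
        have h0 : HasSum (a i) 0 := by
          have : a i = 0 := funext hc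
          rw [this]; exact hasSum_zero
        exact one_ne_zero ((hrow i).unique h0)
      have hex' : ∀ j, ∃ i, a i j ≠ 0 := by
        intro j
        by_contra hc
        push_neg at hc
        have h0 : HasSum (fun i => a i j) 0 := by
          have : (fun i => a i j) = 0 := funext hc
          rw [this]; exact hasSum_zero
        exact one_ne_zero ((hcol j).unique h0)
      have hcnt : ∀ j, (Function.support fun i => a i j).Countable :=
        fun j => (hcol j).summable.countable_support
      have hcnt' : ∀ i, (Function.support fun j => a i j).Countable :=
        fun i => (hrow i).summable.countable_support
      obtain ⟨e1⟩ := aux_embed a hex hcnt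
      obtain ⟨e2⟩ := aux_embed (fun j i => a i j) hex' hcnt'
      exact ⟨(aux_equiv e1 e2).some.symm⟩
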